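/- arXiv:1709.03663 — 3 statements merged into one kernel-verified Lean document; each statement's English description precedes it below -/
import Mathlib

section
/- A linear threshold function f on n variables is Goldilocks (i.e., it has a positive realization, a small realization, and an ample realization) if and only if it has a single realization (w, θ) that is simultaneously positive, small, and ample, i.e., 0 < w_i ≤ θ for all i and Σ_{i=1}^n w_i > 2θ. -/
/-- Dot product of a rational weight vector with a 0-1 boolean vector. -/
def dotProd {n : ℕ} (w : Fin n → ℚ) (x : Fin n → Bool) : ℚ :=
  ∑ i, if x i then w i else 0

/-- `(w, θ)` is a realization of the boolean function `f`. -/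
def IsRealization {n : ℕ} (f : (Fin n → Bool) → Bool) (w : Fin n → ℚ) (θ : ℚ) : Prop :=
  ∀ x, f x = true ↔ θ < dotProd w x

/-- `f` is a linear threshold function. -/
def IsLTF {n : ℕ} (f : (Fin n → Bool) → Bool) : Prop :=
  ∃ w θ, IsRealization f w θ

lemma dot_e {n : ℕ} (w : Fin n → ℚ) (i : Fin n) :
    dotProd w (fun j => decide (j = i)) = w i := by
  unfold dotProd
  simp

lemma dot_nonneg {n : ℕ} (w : Fin n → ℚ) (hpos : ∀ i, 0 < w i) (x : Fin n → Bool) :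
    0 ≤ dotProd w x := by
  apply Finset.sum_nonneg
  intro i _
  split
  · exact (hpos i).le
  · rfl

lemma dot_add_compl {n : ℕ} (w : Fin n → ℚ) (x : Fin n → Bool) :
    dotProd w x + dotProd w (fun i => !(x i)) = ∑ i, w i := by
  unfold dotProd
  rw [← Finset.sum_add_distrib]
  apply Finset.sum_congr rfl
  intro i _
  cases hxi : x i <;> simp [hxi]

/-- An LTF is Goldilocks (has a positive realization, a small realization and an ample
realization) iff it has a single realization that is simultaneously positive, small
and ample. -/
theorem stmt_2 (n : ℕ) (f : (Fin n → Bool) → Bool) (hf : IsLTF f) :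
    ((∃ w θ, IsRealization f w θ ∧ ∀ i, 0 < w i) ∧
        (∃ w θ, IsRealization f w θ ∧ ∀ i, w i ≤ θ) ∧
        (∃ w θ, IsRealization f w θ ∧ 2 * θ < ∑ i, w i)) ↔
      ∃ w θ, IsRealization f w θ ∧ (∀ i, 0 < w i ∧ w i ≤ θ) ∧ 2 * θ < ∑ i, w i := by
  constructor
  · rintro ⟨⟨w1, θ1, hr1, hpos⟩, ⟨w2, θ2, hr2, hsm⟩, ⟨w3, θ3, hr3, hamp⟩⟩
    -- (a) f is false on every standard basis vector
    have ha : ∀ i : Fin n, f (fun j => decide (j = i)) = false := by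
      intro i
      by_contra h
      have h' : f (fun j => decide (j = i)) = true := by
        cases hfe : f (fun j => decide (j = i)) <;> simp_all
      have h2 := (hr2 _).mp h'
      rw [dot_e] at h2
      exact absurd h2 (not_lt.mpr (hsm i))
    -- (b) f x or f (complement x) is true
    have hb : ∀ x, f x = false → f (fun i => !(x i)) = true := by
      intro x hx
      by_contra h
      have h' : f (fun i => !(x i)) = false := by
        cases hfe : f (fun i => !(x i)) <;> simp_all
      have hx3 : ¬ θ3 < dotProd w3 x := fun hc => by simp [(hr3 x).mpr hc] at hx
      have hx3' : ¬ θ3 < dotProd w3 (fun i => !(x i)) := fun hc => by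
        simp [(hr3 _).mpr hc] at h'
      have hsum := dot_add_compl w3 x
      have : ∑ i, w3 i ≤ 2 * θ3 := by
        rw [← hsum]; linarith [not_lt.mp hx3, not_lt.mp hx3']
      linarith
    -- the new threshold
    set T : Finset ℚ :=
      insert (-1) ((Finset.univ.filter (fun x => f x = false)).image (dotProd w1)) with hT
    have hTne : T.Nonempty := ⟨-1, Finset.mem_insert_self _ _⟩
    set θ' := T.max' hTne with hθ'
    have hfalse_le : ∀ x, f x = false → dotProd w1 x ≤ θ' := by
      intro x hx
      apply T.le_max'
      exact Finset.mem_insert_of_mem (Finset.mem_image_of_mem _ (by simp [hx]))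
    have hreal : IsRealization f w1 θ' := by
      intro x
      constructor
      · intro hx
        rw [hθ', Finset.max'_lt_iff]
        intro b hb'
        rcases Finset.mem_insert.mp hb' with hb1 | hb2
        · subst hb1
          have := dot_nonneg w1 hpos x
          linarith
        · obtain ⟨y, hy, hby⟩ := Finset.mem_image.mp hb2
          have hyf : f y = false := (Finset.mem_filter.mp hy).2
          have h1 : dotProd w1 y ≤ θ1 := by
            by_contra hc
            simp [(hr1 y).mpr (not_le.mp hc)] at hyf
          have h2 : θ1 < dotProd w1 x := (hr1 x).mp hx
          rw [← hby] at *
          linarith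
      · intro hx
        by_contra h
        have hx0 : f x = false := by cases hfx : f x <;> simp_all
        exact absurd hx (not_lt.mpr (hfalse_le x hx0))
    refine ⟨w1, θ', hreal, fun i => ⟨hpos i, ?_⟩, ?_⟩
    · have := hfalse_le _ (ha i)
      rwa [dot_e] at this
    · have hmem : θ' ∈ T := T.max'_mem hTne
      rcases Finset.mem_insert.mp hmem with h1 | h2
      · have : (0:ℚ) ≤ ∑ i, w1 i := by
          apply Finset.sum_nonneg; intro i _; exact (hpos i).le
        rw [h1] at *
        linarith
      · obtain ⟨y, hy, hby⟩ := Finset.mem_image.mp h2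
        have hyf : f y = false := (Finset.mem_filter.mp hy).2
        have hcomp : f (fun i => !(y i)) = true := hb y hyf
        have hgt : θ' < dotProd w1 (fun i => !(y i)) := (hreal _).mp hcomp
        have hsum := dot_add_compl w1 y
        rw [hby] at hsum
        linarith
  · rintro ⟨w, θ, hr, h1, h2⟩
    exact ⟨⟨w, θ, hr, fun i => (h1 i).1⟩, ⟨w, θ, hr, fun i => (h1 i).2⟩, ⟨w, θ, hr, h2⟩⟩
end

section
/- Let f be a linear threshold function on n variables. Then f has a realization (w, θ) with Σ_{i=1}^n w_i > 2θ if and only if for every x ∈ {0,1}^n, f(x) = 0 implies f(x̄) = 1, where x̄ denotes the coordinatewise negation of x. -/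
lemma dot_neg {n : ℕ} (w : Fin n → ℚ) (x : Fin n → Bool) :
    dotProd w (fun i => !(x i)) = (∑ i, w i) - dotProd w x := by
  simp only [dotProd, ← Finset.sum_sub_distrib]
  apply Finset.sum_congr rfl
  intro i _
  by_cases hxi : x i <;> simp [hxi]

/-- An LTF has an ample realization iff `f x = 0` implies `f x̄ = 1` for all `x`. -/
theorem stmt_8 (n : ℕ) (f : (Fin n → Bool) → Bool) (hf : IsLTF f) :
    (∃ w θ, IsRealization f w θ ∧ 2 * θ < ∑ i, w i) ↔
      ∀ x, f x = false → f (fun i => !(x i)) = true := by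
  constructor
  · rintro ⟨w, θ, hreal, hsum⟩ x hx
    have hle : dotProd w x ≤ θ := by
      by_contra hlt
      push_neg at hlt
      have := (hreal x).2 hlt
      simp [hx] at this
    rw [hreal, dot_neg]
    linarith
  · intro h
    obtain ⟨w, θ, hreal⟩ := hf
    by_cases hS : ∃ x, f x = false
    · obtain ⟨x₀, hx₀⟩ := hS
      set S : Finset (Fin n → Bool) := Finset.univ.filter (fun x => f x = false) with hSdef
      have hSne : S.Nonempty := ⟨x₀, by simp [hSdef, hx₀]⟩
      have hTne : (S.image (dotProd w)).Nonempty := hSne.image _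
      set θ' := (S.image (dotProd w)).max' hTne with hθ'
      have hmem : ∀ x ∈ S, dotProd w x ≤ θ' := fun x hx =>
        Finset.le_max' _ _ (Finset.mem_image_of_mem _ hx)
      obtain ⟨y, hyS, hy⟩ := Finset.mem_image.1 ((S.image (dotProd w)).max'_mem hTne)
      have hyf : f y = false := (Finset.mem_filter.1 hyS).2
      have hyθ : dotProd w y ≤ θ := by
        by_contra hlt; push_neg at hlt
        have := (hreal y).2 hlt; simp [hyf] at this
      have hyθ' : dotProd w y = θ' := by rw [hθ']; exact hy
      have hθ'le : θ' ≤ θ := by rw [← hyθ']; exact hyθ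
      refine ⟨w, θ', ?_, ?_⟩
      · intro x
        constructor
        · intro hfx
          exact lt_of_le_of_lt hθ'le ((hreal x).1 hfx)
        · intro hlt
          by_contra hfx
          have hxf : f x = false := by simpa using hfx
          have : dotProd w x ≤ θ' := hmem x (by simp [hSdef, hxf])
          linarith
      · have h2 := (hreal _).1 (h y hyf)
        rw [dot_neg] at h2
        linarith
    · push_neg at hS
      have hall : ∀ x, f x = true := by
        intro x
        cases hfx : f x
        · exact absurd hfx (hS x)
        · rfl
      have hne : (Finset.univ.image (dotProd w) : Finset ℚ).Nonempty :=
        ⟨dotProd w (fun _ => false), Finset.mem_image_of_mem _ (Finset.mem_univ _)⟩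
      set M := (Finset.univ.image (dotProd w)).min' hne with hM
      set θ' := min (M - 1) ((∑ i, w i) / 2 - 1) with hθ'
      refine ⟨w, θ', ?_, ?_⟩
      · intro x
        simp only [hall x, true_iff]
        have h1 : M ≤ dotProd w x :=
          Finset.min'_le _ _ (Finset.mem_image_of_mem _ (Finset.mem_univ x))
        have h2 : θ' ≤ M - 1 := min_le_left _ _
        linarith
      · have : θ' ≤ (∑ i, w i) / 2 - 1 := min_le_right _ _
        linarith
end

section
/- Let f be a linear threshold function on n variables and let i ∈ {1,…,n}. Then the i-th Chow parameter a_i equals 2^{n−1} if and only if f is independent of its i-th coordinate, i.e., f(x_1,…,x_{i−1},1,x_{i+1},…,x_n) = f(x_1,…,x_{i−1},0,x_{i+1},…,x_n) for all choices of the remaining coordinates. -/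
lemma dot_update {n : ℕ} (w : Fin n → ℚ) (x : Fin n → Bool) (i : Fin n) :
    dotProd w (Function.update x i true) = dotProd w (Function.update x i false) + w i := by
  unfold dotProd
  rw [← Finset.sum_erase_add _ _ (Finset.mem_univ i),
      ← Finset.sum_erase_add _ _ (Finset.mem_univ i)]
  have h : ∀ b : Bool, ∑ j ∈ Finset.univ.erase i,
      (if Function.update x i b j = true then w j else 0)
      = ∑ j ∈ Finset.univ.erase i, (if x j = true then w j else 0) := by
    intro b
    apply Finset.sum_congr rfl
    intro j hj
    rw [Function.update_of_ne (Finset.ne_of_mem_erase hj)]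
  rw [h, h]
  simp

/-- The `i`-th Chow parameter of an LTF equals `2^(n-1)` iff `f` is independent of its
`i`-th coordinate. -/
theorem stmt_15 (n : ℕ) (f : (Fin n → Bool) → Bool) (hf : IsLTF f) (i : Fin n) :
    (Finset.univ.filter fun x : Fin n → Bool => f x = true ∧ x i = true).card +
        (Finset.univ.filter fun x : Fin n → Bool => f x = false ∧ x i = false).card =
      2 ^ (n - 1) ↔
      ∀ x : Fin n → Bool, f (Function.update x i true) = f (Function.update x i false) := by
  classical
  obtain ⟨w, θ, hw⟩ := hf
  set T : Finset (Fin n → Bool) := Finset.univ.filter (fun x => x i = false) with hT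
  clear_value T
  have hmemT : ∀ x : Fin n → Bool, x ∈ T ↔ x i = false := by
    intro x; simp [hT]
  have hfix : ∀ x ∈ T, Function.update x i false = x := by
    intro x hx
    have hx' : x i = false := (hmemT x).mp hx
    rw [← hx']
    exact Function.update_eq_self i x
  have hfixT : ∀ x : Fin n → Bool, x i = true → Function.update x i true = x := by
    intro x hx
    rw [← hx]
    exact Function.update_eq_self i x
  -- first cardinality
  have hA : (Finset.univ.filter fun x : Fin n → Bool => f x = true ∧ x i = true).card
      = (T.filter fun x => f (Function.update x i true) = true).card := by
    apply Finset.card_nbij' (fun x => Function.update x i false)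
        (fun x => Function.update x i true)
    · intro x hx
      simp only [Finset.mem_coe, Finset.mem_filter, Finset.mem_univ, true_and] at hx ⊢
      refine ⟨(hmemT _).mpr (by simp), ?_⟩
      rw [Function.update_idem, hfixT x hx.2]
      exact hx.1
    · intro x hx
      simp only [Finset.mem_coe, Finset.mem_filter, Finset.mem_univ, true_and] at hx ⊢
      exact ⟨hx.2, by simp⟩
    · intro x hx
      simp only [Finset.mem_coe, Finset.mem_filter, Finset.mem_univ, true_and] at hx
      beta_reduce
      rw [Function.update_idem, hfixT x hx.2]
    · intro x hx
      simp only [Finset.mem_coe, Finset.mem_filter] at hx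
      beta_reduce
      rw [Function.update_idem]
      exact hfix x hx.1
  have hB : (Finset.univ.filter fun x : Fin n → Bool => f x = false ∧ x i = false).card
      = (T.filter fun x => f x = false).card := by
    congr 1
    rw [hT, Finset.filter_filter]
    apply Finset.filter_congr
    intro x _
    tauto
  -- sum form
  have hsum : (Finset.univ.filter fun x : Fin n → Bool => f x = true ∧ x i = true).card +
        (Finset.univ.filter fun x : Fin n → Bool => f x = false ∧ x i = false).card
      = ∑ x ∈ T, ((if f (Function.update x i true) = true then 1 else 0)
          + (if f x = true then 0 else 1)) := by
    rw [hA, hB, Finset.sum_add_distrib, Finset.card_filter, Finset.card_filter]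
    congr 1
    apply Finset.sum_congr rfl
    intro x _
    cases h : f x <;> simp
  -- cardinality of T
  have hTcard : T.card = 2 ^ (n - 1) := by
    clear hsum hA hB
    have h1 : (Finset.univ.filter fun x : Fin n → Bool => ¬ x i = false).card = T.card := by
      apply Finset.card_nbij' (fun x => Function.update x i false)
          (fun x => Function.update x i true)
      · intro x _; exact (hmemT _).mpr (by simp)
      · intro x _
        simp only [Finset.mem_filter, Finset.mem_univ, true_and]
        simp
      · intro x hx
        simp only [Finset.mem_coe, Finset.mem_filter, Finset.mem_univ, true_and, Bool.not_eq_false] at hx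
        beta_reduce
        rw [Function.update_idem, hfixT x hx]
      · intro x hx
        beta_reduce
        rw [Function.update_idem]
        exact hfix x hx
    have h2 : T.card + (Finset.univ.filter fun x : Fin n → Bool => ¬ x i = false).card
        = (Finset.univ : Finset (Fin n → Bool)).card := by
      rw [hT]
      exact Finset.card_filter_add_card_filter_not _
    have hcu : (Finset.univ : Finset (Fin n → Bool)).card = 2 ^ n := by
      simp [Finset.card_univ]
    have hpos : 0 < n := i.pos
    have hpow : 2 ^ n = 2 * 2 ^ (n - 1) := by
      have hn : n - 1 + 1 = n := Nat.succ_pred_eq_of_pos hpos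
      calc 2 ^ n = 2 ^ (n - 1 + 1) := by rw [hn]
        _ = 2 ^ (n - 1) * 2 := pow_succ 2 (n - 1)
        _ = 2 * 2 ^ (n - 1) := by ring
    rw [h1, hcu, hpow, ← two_mul] at h2
    exact Nat.eq_of_mul_eq_mul_left (by norm_num) h2
  -- rewrite RHS
  have hrhs : (∀ x : Fin n → Bool, f (Function.update x i true) = f (Function.update x i false))
      ↔ ∀ x ∈ T, f (Function.update x i true) = f x := by
    constructor
    · intro h x hx
      rw [h x, hfix x hx]
    · intro h x
      have hmem : Function.update x i false ∈ T := (hmemT _).mpr (by simp)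
      have := h _ hmem
      rwa [Function.update_idem] at this
  rw [hsum, hrhs, ← hTcard, Finset.card_eq_sum_ones]
  -- termwise analysis
  have hkey : ∀ x ∈ T,
      ((if f (Function.update x i true) = true then 1 else 0)
          + (if f x = true then 0 else 1) = 1) ↔ f (Function.update x i true) = f x := by
    intro x _
    cases h1 : f (Function.update x i true) <;> cases h2 : f x <;> simp
  rcases le_or_gt 0 (w i) with hwi | hwi
  · -- each term ≥ 1
    have hle : ∀ x ∈ T, 1 ≤ (if f (Function.update x i true) = true then 1 else 0)
        + (if f x = true then 0 else 1) := by
      intro x hx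
      cases h2 : f x with
      | false => simp
      | true =>
        have hup : f (Function.update x i true) = true := by
          rw [hw, dot_update]
          have hx' : θ < dotProd w x := (hw x).mp h2
          rw [hfix x hx]
          linarith
        simp [hup]
    rw [eq_comm, Finset.sum_eq_sum_iff_of_le hle]
    constructor
    · intro h x hx
      exact (hkey x hx).mp (h x hx).symm
    · intro h x hx
      exact ((hkey x hx).mpr (h x hx)).symm
  · -- each term ≤ 1
    have hle : ∀ x ∈ T, (if f (Function.update x i true) = true then 1 else 0)
        + (if f x = true then 0 else 1) ≤ 1 := by
      intro x hx
      cases h1 : f (Function.update x i true) with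
      | false =>
        simp only [Bool.false_eq_true, if_false, zero_add]
        split <;> simp
      | true =>
        have hx' : f x = true := by
          rw [hw]
          have h2 : θ < dotProd w (Function.update x i true) := (hw _).mp h1
          rw [dot_update, hfix x hx] at h2
          linarith
        simp [hx']
    rw [Finset.sum_eq_sum_iff_of_le hle]
    constructor
    · intro h x hx
      exact (hkey x hx).mp (h x hx)
    · intro h x hx
      exact (hkey x hx).mpr (h x hx)
end
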